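/- Let Ω be a nonempty compact convex subset of ℝ^n (n ≥ 2) and δ > 0. Then for every unit vector v, the level of the maximal cap of the δ-parallel body equals that of Ω: l_{Ω_δ}(v) = l_Ω(v). -/

import Mathlib

open scoped RealInnerProductSpace

/-- Reflection in the hyperplane `{x : x·v = b}` (for a unit vector `v`). -/
noncomputable def reflHyp {n : ℕ} (v : EuclideanSpace ℝ (Fin n)) (b : ℝ)
    (x : EuclideanSpace ℝ (Fin n)) : EuclideanSpace ℝ (Fin n) :=
  x - (2 * (⟪x, v⟫ - b)) • v

/-- The open cap of `X` above the hyperplane `{x : x·v = b}`. -/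
def cap {n : ℕ} (X : Set (EuclideanSpace ℝ (Fin n))) (v : EuclideanSpace ℝ (Fin n)) (b : ℝ) :
    Set (EuclideanSpace ℝ (Fin n)) :=
  X ∩ {x | b < ⟪x, v⟫}

/-- The level of the maximal cap of `X` in direction `v`. -/
noncomputable def level {n : ℕ} (X : Set (EuclideanSpace ℝ (Fin n)))
    (v : EuclideanSpace ℝ (Fin n)) : ℝ :=
  sInf {a : ℝ | ∀ b : ℝ, a ≤ b → reflHyp v b '' cap X v b ⊆ X}

/-- The minimal unfolded region (heart) of `X`. -/
noncomputable def Uf {n : ℕ} (X : Set (EuclideanSpace ℝ (Fin n))) :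
    Set (EuclideanSpace ℝ (Fin n)) :=
  ⋂ v ∈ {v : EuclideanSpace ℝ (Fin n) | ‖v‖ = 1}, {x | ⟪x, v⟫ ≤ level X v}

/-- The δ-parallel body of `Ω`: the union of closed δ-balls centered in `Ω`. -/
def parallelBody {n : ℕ} (Ω : Set (EuclideanSpace ℝ (Fin n))) (δ : ℝ) :
    Set (EuclideanSpace ℝ (Fin n)) :=
  ⋃ x ∈ Ω, Metric.closedBall x δ

lemma inner_vv {n : ℕ} {v : EuclideanSpace ℝ (Fin n)} (hv : ‖v‖ = 1) : ⟪v, v⟫ = 1 := by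
  rw [real_inner_self_eq_norm_sq, hv]; norm_num

lemma inner_reflHyp {n : ℕ} {v : EuclideanSpace ℝ (Fin n)} (hv : ‖v‖ = 1)
    (b : ℝ) (x : EuclideanSpace ℝ (Fin n)) :
    ⟪reflHyp v b x, v⟫ = 2 * b - ⟪x, v⟫ := by
  rw [reflHyp, inner_sub_left, real_inner_smul_left, inner_vv hv]; ring

lemma reflHyp_invol {n : ℕ} {v : EuclideanSpace ℝ (Fin n)} (hv : ‖v‖ = 1)
    (b : ℝ) (x : EuclideanSpace ℝ (Fin n)) :
    reflHyp v b (reflHyp v b x) = x := by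
  have h := inner_reflHyp hv b x
  simp only [reflHyp] at h ⊢
  rw [h]
  module

lemma norm_sub_smul_sq {n : ℕ} {v : EuclideanSpace ℝ (Fin n)} (hv : ‖v‖ = 1)
    (u : EuclideanSpace ℝ (Fin n)) (c : ℝ) :
    ‖u - c • v‖ ^ 2 = ‖u‖ ^ 2 - 2 * c * ⟪u, v⟫ + c ^ 2 := by
  have h1 : ‖c • v‖ ^ 2 = c ^ 2 := by
    rw [norm_smul, hv, mul_one, Real.norm_eq_abs, sq_abs]
  rw [norm_sub_sq_real, real_inner_smul_right, h1]; ring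

lemma reflHyp_sub {n : ℕ} (v : EuclideanSpace ℝ (Fin n)) (b : ℝ)
    (x y : EuclideanSpace ℝ (Fin n)) :
    reflHyp v b x - reflHyp v b y = (x - y) - (2 * ⟪x - y, v⟫) • v := by
  simp only [reflHyp, inner_sub_left]
  module

lemma reflHyp_isometry {n : ℕ} {v : EuclideanSpace ℝ (Fin n)} (hv : ‖v‖ = 1)
    (b : ℝ) (x y : EuclideanSpace ℝ (Fin n)) :
    ‖reflHyp v b x - reflHyp v b y‖ = ‖x - y‖ := by
  have h : ‖reflHyp v b x - reflHyp v b y‖ ^ 2 = ‖x - y‖ ^ 2 := by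
    rw [reflHyp_sub, norm_sub_smul_sq hv]; ring
  nlinarith [norm_nonneg (reflHyp v b x - reflHyp v b y), norm_nonneg (x - y)]

lemma var_ineq {n : ℕ} {Ω : Set (EuclideanSpace ℝ (Fin n))} (hconv : Convex ℝ Ω)
    {p y q : EuclideanSpace ℝ (Fin n)} (hp : p ∈ Ω)
    (hmin : ∀ r ∈ Ω, dist y p ≤ dist y r) (hq : q ∈ Ω) :
    ⟪y - p, q - p⟫ ≤ 0 := by
  by_contra hpos
  push_neg at hpos
  have hqp : q - p ≠ 0 := by
    intro h0
    rw [h0, inner_zero_right] at hpos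
    exact lt_irrefl 0 hpos
  have hn : (0:ℝ) < ‖q - p‖ ^ 2 := pow_pos (norm_pos_iff.mpr hqp) 2
  set t : ℝ := min 1 (⟪y - p, q - p⟫ / ‖q - p‖ ^ 2) with ht
  have ht0 : 0 < t := lt_min one_pos (div_pos hpos hn)
  have ht1 : t ≤ 1 := min_le_left _ _
  have htc : t * ‖q - p‖ ^ 2 ≤ ⟪y - p, q - p⟫ := by
    have h := min_le_right 1 (⟪y - p, q - p⟫ / ‖q - p‖ ^ 2)
    calc t * ‖q - p‖ ^ 2 ≤ (⟪y - p, q - p⟫ / ‖q - p‖ ^ 2) * ‖q - p‖ ^ 2 :=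
          mul_le_mul_of_nonneg_right h (le_of_lt hn)
      _ = ⟪y - p, q - p⟫ := by field_simp
  have hr : p + t • (q - p) ∈ Ω := by
    have heq : p + t • (q - p) = (1 - t) • p + t • q := by module
    rw [heq]
    exact hconv hp hq (by linarith) (le_of_lt ht0) (by ring)
  have hle := hmin _ hr
  rw [dist_eq_norm, dist_eq_norm] at hle
  have h1 : ‖t • (q - p)‖ ^ 2 = t ^ 2 * ‖q - p‖ ^ 2 := by
    rw [norm_smul, Real.norm_eq_abs, mul_pow, sq_abs]
  have hsq : ‖y - (p + t • (q - p))‖ ^ 2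
      = ‖y - p‖ ^ 2 - 2 * t * ⟪y - p, q - p⟫ + t ^ 2 * ‖q - p‖ ^ 2 := by
    have heq : y - (p + t • (q - p)) = (y - p) - t • (q - p) := by module
    rw [heq, norm_sub_sq_real, real_inner_smul_right, h1]; ring
  have h2 : ‖y - p‖ ^ 2 ≤ ‖y - (p + t • (q - p))‖ ^ 2 := by
    nlinarith [norm_nonneg (y - p), norm_nonneg (y - (p + t • (q - p)))]
  nlinarith

theorem stmt18 {n : ℕ} (hn : 2 ≤ n) (Ω : Set (EuclideanSpace ℝ (Fin n)))
    (hΩne : Ω.Nonempty) (hΩ : IsCompact Ω) (hconv : Convex ℝ Ω) (δ : ℝ) (hδ : 0 < δ)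
    (v : EuclideanSpace ℝ (Fin n)) (hv : ‖v‖ = 1) :
    level (parallelBody Ω δ) v = level Ω v := by
  have hmem : ∀ z : EuclideanSpace ℝ (Fin n),
      z ∈ parallelBody Ω δ ↔ ∃ x ∈ Ω, dist z x ≤ δ := by
    intro z
    simp [parallelBody, Metric.mem_closedBall]
  have hset : {a : ℝ | ∀ b : ℝ, a ≤ b → reflHyp v b '' cap (parallelBody Ω δ) v b ⊆ parallelBody Ω δ}
      = {a : ℝ | ∀ b : ℝ, a ≤ b → reflHyp v b '' cap Ω v b ⊆ Ω} := by
    ext a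
    simp only [Set.mem_setOf_eq]
    constructor
    · -- from parallel body to Ω
      intro ha b hb
      rintro _ ⟨x, ⟨hxΩ, hxb⟩, rfl⟩
      have hxb : b < ⟪x, v⟫ := hxb
      set y := reflHyp v b x with hy
      obtain ⟨p, hpΩ, hpd⟩ := hΩ.exists_infDist_eq_dist hΩne y
      have hmin : ∀ r ∈ Ω, dist y p ≤ dist y r := fun r hr => by
        rw [← hpd]; exact Metric.infDist_le_dist_of_mem hr
      by_cases hd0 : dist y p = 0
      · rw [dist_eq_zero] at hd0; rwa [hd0]
      exfalso
      have hd : 0 < dist y p := lt_of_le_of_ne dist_nonneg (Ne.symm hd0)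
      set d := dist y p with hddef
      have hdn : ‖y - p‖ = d := (dist_eq_norm y p).symm
      have hxy : x - y = (2 * (⟪x, v⟫ - b)) • v := by rw [hy, reflHyp]; module
      have hvi := var_ineq hconv hpΩ hmin hxΩ
      have hyp2 : ⟪y - p, y - p⟫ = d ^ 2 := by
        rw [real_inner_self_eq_norm_sq, hdn]
      have hsplit : ⟪y - p, x - p⟫ = 2 * (⟪x, v⟫ - b) * ⟪y - p, v⟫ + d ^ 2 := by
        have hxp : x - p = (x - y) + (y - p) := by module
        rw [hxp, inner_add_right, hxy, real_inner_smul_right, hyp2]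
      have hwv : ⟪y - p, v⟫ < 0 := by nlinarith
      set w : EuclideanSpace ℝ (Fin n) := (d⁻¹) • (y - p) with hwdef
      have hwn : ‖w‖ = 1 := by
        rw [hwdef, norm_smul, Real.norm_eq_abs, abs_of_pos (inv_pos.mpr hd), hdn]
        field_simp
      have hwv' : ⟪w, v⟫ < 0 := by
        rw [hwdef, real_inner_smul_left]
        exact mul_neg_of_pos_of_neg (inv_pos.mpr hd) hwv
      set y2 := y + δ • w with hy2
      set z := reflHyp v b y2 with hz
      have hzy2 : reflHyp v b z = y2 := by rw [hz, reflHyp_invol hv]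
      have hyx : reflHyp v b y = x := by rw [hy, reflHyp_invol hv]
      have hzx : dist z x ≤ δ := by
        rw [dist_eq_norm, hz, ← hyx, reflHyp_isometry hv]
        have : y2 - y = δ • w := by rw [hy2]; module
        rw [this, norm_smul, Real.norm_eq_abs, abs_of_pos hδ, hwn, mul_one]
      have hzmem : z ∈ parallelBody Ω δ := (hmem z).mpr ⟨x, hxΩ, hzx⟩
      have hzcap : b < ⟪z, v⟫ := by
        have h1 : ⟪z, v⟫ = 2 * b - ⟪y2, v⟫ := by rw [hz, inner_reflHyp hv]
        have h2 : ⟪y2, v⟫ = (2 * b - ⟪x, v⟫) + δ * ⟪w, v⟫ := by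
          rw [hy2, inner_add_left, real_inner_smul_left, hy, inner_reflHyp hv]
        rw [h1, h2]
        nlinarith
      have hy2mem : y2 ∈ parallelBody Ω δ := by
        rw [← hzy2]
        exact ha b hb ⟨z, ⟨hzmem, hzcap⟩, rfl⟩
      obtain ⟨q, hqΩ, hqd⟩ := (hmem y2).mp hy2mem
      have hviq := var_ineq hconv hpΩ hmin hqΩ
      have hip : ⟪y2 - q, w⟫ ≥ d + δ := by
        have hdec : y2 - q = (y - p) + δ • w + (p - q) := by rw [hy2]; module
        have e1 : ⟪y - p, w⟫ = d := by
          rw [hwdef, real_inner_smul_right, hyp2]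
          field_simp
        have e2 : ⟪δ • w, w⟫ = δ := by
          rw [real_inner_smul_left, real_inner_self_eq_norm_sq, hwn]
          norm_num
        have e3 : (0:ℝ) ≤ ⟪p - q, w⟫ := by
          have h2 : ⟪p - q, y - p⟫ = -(⟪y - p, q - p⟫) := by
            rw [show p - q = -(q - p) from by module, inner_neg_left, real_inner_comm]
          rw [hwdef, real_inner_smul_right, h2]
          exact mul_nonneg (inv_nonneg.mpr (le_of_lt hd)) (neg_nonneg.mpr hviq)
        rw [hdec, inner_add_left, inner_add_left, e1, e2]
        linarith
      have hcs : ⟪y2 - q, w⟫ ≤ ‖y2 - q‖ := by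
        have h := real_inner_le_norm (y2 - q) w
        rwa [hwn, mul_one] at h
      rw [dist_eq_norm] at hqd
      linarith
    · -- from Ω to parallel body
      intro ha b hb
      rintro _ ⟨z, ⟨hzΩδ, hzb⟩, rfl⟩
      have hzb : b < ⟪z, v⟫ := hzb
      obtain ⟨x, hxΩ, hzx⟩ := (hmem z).mp hzΩδ
      rw [hmem]
      by_cases hxb : b < ⟪x, v⟫
      · refine ⟨reflHyp v b x, ha b hb ⟨x, ⟨hxΩ, hxb⟩, rfl⟩, ?_⟩
        rw [dist_eq_norm, reflHyp_isometry hv, ← dist_eq_norm]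
        exact hzx
      · push_neg at hxb
        refine ⟨x, hxΩ, ?_⟩
        have key : ‖reflHyp v b z - x‖ ^ 2 ≤ ‖z - x‖ ^ 2 := by
          have heq : reflHyp v b z - x = (z - x) - (2 * (⟪z, v⟫ - b)) • v := by
            rw [reflHyp]; module
          rw [heq, norm_sub_smul_sq hv]
          have hiz : ⟪z - x, v⟫ = ⟪z, v⟫ - ⟪x, v⟫ := inner_sub_left _ _ _
          have h5 : 0 ≤ (⟪z, v⟫ - b) * ((⟪z, v⟫ - ⟪x, v⟫) - (⟪z, v⟫ - b)) :=
            mul_nonneg (by linarith) (by linarith)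
          rw [hiz]
          nlinarith
        rw [dist_eq_norm]
        rw [dist_eq_norm] at hzx
        nlinarith [norm_nonneg (reflHyp v b z - x), norm_nonneg (z - x)]
  rw [level, level, hset]
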